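/- For permutations v, w in S_n, if (1) v(a) ≤ w(a) and v(b) ≥ w(b) hold for all a ≤ k < b, and (2) whenever a < b with v(a) < v(b) and w(a) > w(b) one has a ≤ k < b, then v ≤_k w in the k-Bruhat order. -/

import Mathlib

noncomputable section

/-- The length (number of inversions) of a finitely supported permutation of ℕ. -/
def len (w : Equiv.Perm ℕ) : ℕ := Set.ncard {p : ℕ × ℕ | p.1 < p.2 ∧ w p.2 < w p.1}

/-- The covering relation of the `k`-Bruhat order: `w = v·(a,b)` with `a ≤ k < b`
(positions being positive integers) and `ℓ(w) = ℓ(v) + 1`. -/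
def kCov (k : ℕ) (v w : Equiv.Perm ℕ) : Prop :=
  ∃ a b, 0 < a ∧ a ≤ k ∧ k < b ∧ w = v * Equiv.swap a b ∧ len w = len v + 1

/-- The `k`-Bruhat order `≤_k`: reflexive-transitive closure of its covering relation. -/
def kBruhat (k : ℕ) (v w : Equiv.Perm ℕ) : Prop := Relation.ReflTransGen (kCov k) v w

namespace KBruhatAux

open Finset

lemma perm_le_of_fix (u : Equiv.Perm ℕ) (n : ℕ) (hu : ∀ i, n < i → u i = i) :
    ∀ p, p ≤ n → u p ≤ n := by
  intro p hp
  by_contra h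
  push_neg at h
  have h2 := hu (u p) h
  have h3 : u p = p := u.injective h2
  omega

lemma len_eq (u : Equiv.Perm ℕ) (n : ℕ) (hu : ∀ i, n < i → u i = i) :
    len u = ((range (n+1) ×ˢ range (n+1)).filter
      (fun p => p.1 < p.2 ∧ u p.2 < u p.1)).card := by
  rw [len, ← Set.ncard_coe_finset]
  congr 1
  ext p
  simp only [coe_filter, Set.mem_setOf_eq, mem_product, mem_range]
  constructor
  · rintro ⟨h1, h2⟩
    have hp2 : p.2 ≤ n := by
      by_contra hq
      push_neg at hq
      have e2 := hu p.2 hq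
      rcases le_or_gt p.1 n with h' | h'
      · have := perm_le_of_fix u n hu p.1 h'
        omega
      · have := hu p.1 h'
        omega
    exact ⟨⟨by omega, by omega⟩, h1, h2⟩
  · rintro ⟨_, h⟩
    exact h

lemma len_succ (v : Equiv.Perm ℕ) (n a b : ℕ)
    (hfix : ∀ i, n < i → v i = i) (hab : a < b) (hbn : b ≤ n)
    (hvab : v a < v b)
    (gap : ∀ c, a < c → c < b → v c < v a ∨ v b < v c) :
    len (v * Equiv.swap a b) = len v + 1 := by
  classical
  have hne : a ≠ b := hab.ne
  set s : Equiv.Perm ℕ := Equiv.swap a b with hs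
  have hsa : s a = b := Equiv.swap_apply_left a b
  have hsb : s b = a := Equiv.swap_apply_right a b
  have hso : ∀ x, x ≠ a → x ≠ b → s x = x := fun x h1 h2 => Equiv.swap_apply_of_ne_of_ne h1 h2
  have hfix' : ∀ i, n < i → (v * s) i = i := by
    intro i hi
    have h1 : s i = i := hso i (by omega) (by omega)
    simp [Equiv.Perm.mul_apply, h1, hfix i hi]
  have hva' : (v * s) a = v b := by rw [Equiv.Perm.mul_apply, hsa]
  have hvb' : (v * s) b = v a := by rw [Equiv.Perm.mul_apply, hsb]
  have hvo' : ∀ x, x ≠ a → x ≠ b → (v * s) x = v x := by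
    intro x h1 h2; rw [Equiv.Perm.mul_apply, hso x h1 h2]
  rw [len_eq v n hfix, len_eq _ n hfix']
  set F0 : Finset (ℕ × ℕ) := range (n+1) ×ˢ range (n+1) with hF0
  set g : ℕ × ℕ → ℕ × ℕ :=
    fun p => if p.1 < p.2 ↔ s p.1 < s p.2 then (s p.1, s p.2) else p with hg
  have gdef : ∀ x y : ℕ, g (x, y) = if x < y ↔ s x < s y then (s x, s y) else (x, y) :=
    fun x y => rfl
  have key : ∀ p : ℕ × ℕ, p ∈ F0 → p ≠ (a, b) →
      (g p ∈ F0 ∧ g p ≠ (a, b) ∧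
        ((p.1 < p.2 ∧ (v * s) p.2 < (v * s) p.1) ↔
          ((g p).1 < (g p).2 ∧ v (g p).2 < v (g p).1)) ∧
        g (g p) = p) := by
    rintro ⟨x, y⟩ hmem hnab
    simp only [hF0, mem_product, mem_range] at hmem
    obtain ⟨hx, hy⟩ := hmem
    dsimp only
    by_cases hxa : x = a
    · rw [hxa]
      by_cases hya : y = a
      · rw [hya]
        rw [gdef, hsa, if_pos (by omega)]
        refine ⟨?_, ?_, ?_, ?_⟩
        · simp only [hF0, mem_product, mem_range]; omega
        · simp only [ne_eq, Prod.mk.injEq]; omega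
        · dsimp only; constructor <;> (rintro ⟨h, -⟩; omega)
        · rw [gdef, hsb, if_pos (by omega)]
      · by_cases hyb : y = b
        · exact absurd (by rw [hxa, hyb]) hnab
        · rw [gdef, hsa, hso y hya hyb]
          rcases lt_trichotomy y a with hr | hr | hr
        -- y < a
          · rw [if_pos (by omega)]
            refine ⟨?_, ?_, ?_, ?_⟩
            · simp only [hF0, mem_product, mem_range]; omega
            · simp only [ne_eq, Prod.mk.injEq]; omega
            · dsimp only; constructor <;> (rintro ⟨h, -⟩; omega)
            · rw [gdef, hsb, hso y hya hyb, if_pos (by omega)]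
          · exact absurd hr hya
          · rcases lt_trichotomy y b with hr2 | hr2 | hr2
            -- a < y < b
            · rw [if_neg (by omega)]
              refine ⟨?_, ?_, ?_, ?_⟩
              · simp only [hF0, mem_product, mem_range]; omega
              · simp only [ne_eq, Prod.mk.injEq]; omega
              · dsimp only; rw [hva', hvo' y hya hyb]
                have := gap y hr hr2
                constructor <;> (rintro ⟨h, hh⟩; exact ⟨h, by omega⟩)
              · rw [gdef, hsa, hso y hya hyb, if_neg (by omega)]
            · exact absurd hr2 hyb
            -- b < y
            · rw [if_pos (by omega)]
              refine ⟨?_, ?_, ?_, ?_⟩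
              · simp only [hF0, mem_product, mem_range]; omega
              · simp only [ne_eq, Prod.mk.injEq]; omega
              · dsimp only; rw [hva', hvo' y hya hyb]
                constructor <;> (rintro ⟨h, hh⟩; exact ⟨by omega, hh⟩)
              · rw [gdef, hsb, hso y hya hyb, if_pos (by omega)]
    · by_cases hxb : x = b
      · rw [hxb]
        by_cases hya : y = a
        · rw [hya]
          rw [gdef, hsa, hsb, if_neg (by omega)]
          refine ⟨?_, ?_, ?_, ?_⟩
          · simp only [hF0, mem_product, mem_range]; omega
          · simp only [ne_eq, Prod.mk.injEq]; omega
          · dsimp only; constructor <;> (rintro ⟨h, -⟩; omega)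
          · rw [gdef, hsa, hsb, if_neg (by omega)]
        · by_cases hyb : y = b
          · rw [hyb]
            rw [gdef, hsb, if_pos (by omega)]
            refine ⟨?_, ?_, ?_, ?_⟩
            · simp only [hF0, mem_product, mem_range]; omega
            · simp only [ne_eq, Prod.mk.injEq]; omega
            · dsimp only; constructor <;> (rintro ⟨h, -⟩; omega)
            · rw [gdef, hsa, if_pos (by omega)]
          · rw [gdef, hsb, hso y hya hyb]
            rcases lt_trichotomy y a with hr | hr | hr
            -- y < a
            · rw [if_pos (by omega)]
              refine ⟨?_, ?_, ?_, ?_⟩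
              · simp only [hF0, mem_product, mem_range]; omega
              · simp only [ne_eq, Prod.mk.injEq]; omega
              · dsimp only; constructor <;> (rintro ⟨h, -⟩; omega)
              · rw [gdef, hsa, hso y hya hyb, if_pos (by omega)]
            · exact absurd hr hya
            · rcases lt_trichotomy y b with hr2 | hr2 | hr2
              -- a < y < b
              · rw [if_neg (by omega)]
                refine ⟨?_, ?_, ?_, ?_⟩
                · simp only [hF0, mem_product, mem_range]; omega
                · simp only [ne_eq, Prod.mk.injEq]; omega
                · dsimp only; constructor <;> (rintro ⟨h, -⟩; omega)
                · rw [gdef, hsb, hso y hya hyb, if_neg (by omega)]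
              · exact absurd hr2 hyb
              -- b < y
              · rw [if_pos (by omega)]
                refine ⟨?_, ?_, ?_, ?_⟩
                · simp only [hF0, mem_product, mem_range]; omega
                · simp only [ne_eq, Prod.mk.injEq]; omega
                · dsimp only; rw [hvb', hvo' y hya hyb]
                  constructor <;> (rintro ⟨h, hh⟩; exact ⟨by omega, hh⟩)
                · rw [gdef, hsa, hso y hya hyb, if_pos (by omega)]
      · by_cases hya : y = a
        · rw [hya]
          rw [gdef, hsa, hso x hxa hxb]
          rcases lt_trichotomy x a with hr | hr | hr
          -- x < a
          · rw [if_pos (by omega)]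
            refine ⟨?_, ?_, ?_, ?_⟩
            · simp only [hF0, mem_product, mem_range]; omega
            · simp only [ne_eq, Prod.mk.injEq]; omega
            · dsimp only; rw [hva', hvo' x hxa hxb]
              constructor <;> (rintro ⟨h, hh⟩; exact ⟨by omega, hh⟩)
            · rw [gdef, hsb, hso x hxa hxb, if_pos (by omega)]
          · exact absurd hr hxa
          · rcases lt_trichotomy x b with hr2 | hr2 | hr2
            -- a < x < b
            · rw [if_neg (by omega)]
              refine ⟨?_, ?_, ?_, ?_⟩
              · simp only [hF0, mem_product, mem_range]; omega
              · simp only [ne_eq, Prod.mk.injEq]; omega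
              · dsimp only; constructor <;> (rintro ⟨h, -⟩; omega)
              · rw [gdef, hsa, hso x hxa hxb, if_neg (by omega)]
            · exact absurd hr2 hxb
            -- b < x
            · rw [if_pos (by omega)]
              refine ⟨?_, ?_, ?_, ?_⟩
              · simp only [hF0, mem_product, mem_range]; omega
              · simp only [ne_eq, Prod.mk.injEq]; omega
              · dsimp only; constructor <;> (rintro ⟨h, -⟩; omega)
              · rw [gdef, hsb, hso x hxa hxb, if_pos (by omega)]
        · by_cases hyb : y = b
          · rw [hyb]
            rw [gdef, hsb, hso x hxa hxb]
            rcases lt_trichotomy x a with hr | hr | hr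
            -- x < a
            · rw [if_pos (by omega)]
              refine ⟨?_, ?_, ?_, ?_⟩
              · simp only [hF0, mem_product, mem_range]; omega
              · simp only [ne_eq, Prod.mk.injEq]; omega
              · dsimp only; rw [hvb', hvo' x hxa hxb]
                constructor <;> (rintro ⟨h, hh⟩; exact ⟨by omega, hh⟩)
              · rw [gdef, hsa, hso x hxa hxb, if_pos (by omega)]
            · exact absurd hr hxa
            · rcases lt_trichotomy x b with hr2 | hr2 | hr2
              -- a < x < b
              · rw [if_neg (by omega)]
                refine ⟨?_, ?_, ?_, ?_⟩
                · simp only [hF0, mem_product, mem_range]; omega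
                · simp only [ne_eq, Prod.mk.injEq]; omega
                · dsimp only; rw [hvb', hvo' x hxa hxb]
                  have := gap x hr hr2
                  constructor <;> (rintro ⟨h, hh⟩; exact ⟨h, by omega⟩)
                · rw [gdef, hsb, hso x hxa hxb, if_neg (by omega)]
              · exact absurd hr2 hxb
              -- b < x
              · rw [if_pos (by omega)]
                refine ⟨?_, ?_, ?_, ?_⟩
                · simp only [hF0, mem_product, mem_range]; omega
                · simp only [ne_eq, Prod.mk.injEq]; omega
                · dsimp only; constructor <;> (rintro ⟨h, -⟩; omega)
                · rw [gdef, hsa, hso x hxa hxb, if_pos (by omega)]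
          · rw [gdef, hso x hxa hxb, hso y hya hyb, if_pos Iff.rfl]
            refine ⟨?_, ?_, ?_, ?_⟩
            · simp only [hF0, mem_product, mem_range]; omega
            · simp only [ne_eq, Prod.mk.injEq]; omega
            · dsimp only; rw [hvo' x hxa hxb, hvo' y hya hyb]
            · rw [gdef, hso x hxa hxb, hso y hya hyb, if_pos Iff.rfl]
  have habmem' : (a, b) ∈ F0.filter (fun p => p.1 < p.2 ∧ (v * s) p.2 < (v * s) p.1) := by
    simp only [mem_filter, hF0, mem_product, mem_range]
    refine ⟨⟨by omega, by omega⟩, hab, ?_⟩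
    rw [hva', hvb']; exact hvab
  have habnot : (a, b) ∉ F0.filter (fun p => p.1 < p.2 ∧ v p.2 < v p.1) := by
    simp only [mem_filter]
    rintro ⟨-, -, h⟩
    omega
  have hcard : ((F0.erase (a, b)).filter (fun p => p.1 < p.2 ∧ (v * s) p.2 < (v * s) p.1)).card
      = ((F0.erase (a, b)).filter (fun p => p.1 < p.2 ∧ v p.2 < v p.1)).card := by
    apply Finset.card_nbij' g g
    · intro p hp
      simp only [Finset.mem_coe, mem_filter, mem_erase] at hp ⊢
      obtain ⟨⟨hp1, hp2⟩, hp3⟩ := hp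
      obtain ⟨hm, hne', hiff, -⟩ := key p hp2 hp1
      exact ⟨⟨hne', hm⟩, hiff.mp hp3⟩
    · intro p hp
      simp only [Finset.mem_coe, mem_filter, mem_erase] at hp ⊢
      obtain ⟨⟨hp1, hp2⟩, hp3⟩ := hp
      obtain ⟨hm, hne', hiff, hgg⟩ := key p hp2 hp1
      obtain ⟨-, -, hiff2, -⟩ := key (g p) hm hne'
      rw [hgg] at hiff2
      exact ⟨⟨hne', hm⟩, hiff2.mpr hp3⟩
    · intro p hp
      simp only [Finset.mem_coe, mem_filter, mem_erase] at hp
      exact (key p hp.1.2 hp.1.1).2.2.2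
    · intro p hp
      simp only [Finset.mem_coe, mem_filter, mem_erase] at hp
      exact (key p hp.1.2 hp.1.1).2.2.2
  rw [Finset.filter_erase, Finset.filter_erase, Finset.erase_eq_of_notMem habnot] at hcard
  have hc1 := Finset.card_erase_of_mem habmem'
  have hpos : 0 < (F0.filter (fun p => p.1 < p.2 ∧ (v * s) p.2 < (v * s) p.1)).card :=
    card_pos.mpr ⟨(a, b), habmem'⟩
  omega


lemma main (n k : ℕ) (hk : 1 ≤ k) (hkn : k ≤ n) (w : Equiv.Perm ℕ)
    (hw0 : w 0 = 0) (hw : ∀ i, n < i → w i = i) :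
    ∀ m (v : Equiv.Perm ℕ), (∑ i ∈ Finset.range (n+1), Nat.dist (v i) (w i)) < m →
    v 0 = 0 → (∀ i, n < i → v i = i) →
    (∀ a b, 0 < a → a ≤ k → k < b → v a ≤ w a ∧ w b ≤ v b) →
    (∀ a b, 0 < a → a < b → v a < v b → w b < w a → a ≤ k ∧ k < b) →
    kBruhat k v w := by
  intro m
  induction m with
  | zero => intro v hm; omega
  | succ m IH =>
    intro v hm hv0 hvfix h1 h2
    by_cases hvw : v = w
    · exact hvw ▸ Relation.ReflTransGen.refl
    -- convenient consequences of h1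
    have h1a : ∀ a, 0 < a → a ≤ k → v a ≤ w a := fun a h h' => (h1 a (k+1) h h' (by omega)).1
    have h1b : ∀ b, k < b → w b ≤ v b := fun b hb => (h1 1 b one_pos hk hb).2
    have hvle := perm_le_of_fix v n hvfix
    have hwle := perm_le_of_fix w n hw
    -- there is a position a ≤ k with v a < w a
    have hA : ∃ a, 0 < a ∧ a ≤ k ∧ v a < w a := by
      by_contra hA
      push_neg at hA
      have heq : ∀ a, a ≤ k → v a = w a := by
        intro a ha
        rcases Nat.eq_zero_or_pos a with rfl | h
        · rw [hv0, hw0]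
        · exact le_antisymm (h1a a h ha) (hA a h ha)
      -- sums of v and of w over range (n+1) agree with the sum of the identity
      have hsv : ∑ i ∈ range (n+1), v i = ∑ i ∈ range (n+1), i := by
        apply Finset.sum_nbij' (fun i => v i) (fun i => v.symm i)
        · intro i hi
          simp only [mem_range] at hi ⊢
          have := hvle i (by omega); omega
        · intro i hi
          simp only [mem_range] at hi ⊢
          have hsymfix : ∀ j, n < j → v.symm j = j := by
            intro j hj
            have := hvfix j hj
            conv_lhs => rw [← this]
            exact v.symm_apply_apply j
          have := perm_le_of_fix v.symm n hsymfix i (by omega)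
          omega
        · intro i _; exact v.symm_apply_apply i
        · intro i _; exact v.apply_symm_apply i
        · intro i _; rfl
      have hsw : ∑ i ∈ range (n+1), w i = ∑ i ∈ range (n+1), i := by
        apply Finset.sum_nbij' (fun i => w i) (fun i => w.symm i)
        · intro i hi
          simp only [mem_range] at hi ⊢
          have := hwle i (by omega); omega
        · intro i hi
          simp only [mem_range] at hi ⊢
          have hsymfix : ∀ j, n < j → w.symm j = j := by
            intro j hj
            have := hw j hj
            conv_lhs => rw [← this]
            exact w.symm_apply_apply j
          have := perm_le_of_fix w.symm n hsymfix i (by omega)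
          omega
        · intro i _; exact w.symm_apply_apply i
        · intro i _; exact w.apply_symm_apply i
        · intro i _; rfl
      -- split the range at k+1
      have hsplit1 : ∑ i ∈ Ico 0 (k+1), (v i) + ∑ i ∈ Ico (k+1) (n+1), v i
          = ∑ i ∈ range (n+1), v i := by
        rw [Finset.sum_Ico_consecutive _ (by omega) (by omega), Finset.range_eq_Ico]
      have hsplit2 : ∑ i ∈ Ico 0 (k+1), (w i) + ∑ i ∈ Ico (k+1) (n+1), w i
          = ∑ i ∈ range (n+1), w i := by
        rw [Finset.sum_Ico_consecutive _ (by omega) (by omega), Finset.range_eq_Ico]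
      have hlow : ∑ i ∈ Ico 0 (k+1), (v i) = ∑ i ∈ Ico 0 (k+1), w i := by
        apply Finset.sum_congr rfl
        intro i hi
        simp only [mem_Ico] at hi
        exact heq i (by omega)
      have hhigh : ∑ i ∈ Ico (k+1) (n+1), v i = ∑ i ∈ Ico (k+1) (n+1), w i := by omega
      -- pointwise w ≤ v on the high interval, sums equal ⇒ pointwise equal
      have heqh : ∀ i ∈ Ico (k+1) (n+1), v i = w i := by
        by_contra hcon
        push_neg at hcon
        obtain ⟨i0, hi0, hne0⟩ := hcon
        simp only [mem_Ico] at hi0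
        have hlt : w i0 < v i0 := lt_of_le_of_ne (h1b i0 (by omega)) (fun h => hne0 h.symm)
        have : ∑ i ∈ Ico (k+1) (n+1), w i < ∑ i ∈ Ico (k+1) (n+1), v i := by
          apply Finset.sum_lt_sum
          · intro i hi
            simp only [mem_Ico] at hi
            exact h1b i (by omega)
          · exact ⟨i0, by simp only [mem_Ico]; omega, hlt⟩
        omega
      apply hvw
      ext x
      rcases Nat.eq_zero_or_pos x with rfl | hx0
      · rw [hv0, hw0]
      rcases le_or_gt x k with hxk | hxk
      · exact heq x hxk
      rcases le_or_gt x n with hxn | hxn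
      · exact heqh x (by simp only [mem_Ico]; omega)
      · rw [hvfix x hxn, hw x hxn]
    -- choose a with v a maximal
    obtain ⟨a0, ha0⟩ := hA
    obtain ⟨a, haA, hamax⟩ := Finset.exists_max_image
      ((Finset.Icc 1 k).filter (fun a => v a < w a)) v
      ⟨a0, by simp only [mem_filter, mem_Icc]; exact ⟨⟨ha0.1, ha0.2.1⟩, ha0.2.2⟩⟩
    simp only [mem_filter, mem_Icc] at haA
    obtain ⟨⟨ha1, hak⟩, havw⟩ := haA
    have hamax' : ∀ c, 0 < c → c ≤ k → v c < w c → v c ≤ v a := by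
      intro c h h' h''
      exact hamax c (by simp only [mem_filter, mem_Icc]; exact ⟨⟨h, h'⟩, h''⟩)
    have ha0' : 0 < a := ha1
    have hva1 : 0 < v a := by
      have : v a ≠ 0 := fun h => by
        have : v a = v 0 := by rw [h, hv0]
        have := v.injective this
        omega
      omega
    have hwan : w a ≤ n := hwle a (by omega)
    -- descent: find b > k with v a < v b ≤ w a and w b ≤ v a
    have descent : ∀ t, ∀ b, k < b → b ≤ n → v a < v b → v b ≤ w a → w b < v b → v b ≤ t →
        ∃ b', k < b' ∧ b' ≤ n ∧ v a < v b' ∧ v b' ≤ w a ∧ w b' ≤ v a := by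
      intro t
      induction t with
      | zero => intro b _ _ h _ _ ht; omega
      | succ t IHt =>
        intro b hb1 hb2 hb3 hb4 hb5 hb6
        by_cases hc : w b ≤ v a
        · exact ⟨b, hb1, hb2, hb3, hb4, hc⟩
        · push_neg at hc
          obtain ⟨b', hvb'⟩ : ∃ b', v b' = w b := ⟨v.symm (w b), v.apply_symm_apply _⟩
          have hb'0 : 0 < b' := by
            have : b' ≠ 0 := fun h => by
              rw [h] at hvb'
              rw [hv0] at hvb'
              omega
            omega
          have hb'k : k < b' := by
            by_contra hle
            push_neg at hle
            have hle2 := h1a b' hb'0 hle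
            rcases lt_or_eq_of_le hle2 with h' | h'
            · have := hamax' b' hb'0 hle h'
              omega
            · -- v b' = w b', so w b' = w b, so b' = b, contradiction
              have : b' = b := w.injective (by rw [← h', hvb'])
              omega
          have hb'n : b' ≤ n := by
            by_contra h'
            push_neg at h'
            have := hvfix b' h'
            rw [this] at hvb'
            have := h1b b hb1
            omega
          have hwb'lt : w b' < v b' := by
            have hle2 := h1b b' hb'k
            rcases lt_or_eq_of_le hle2 with h' | h'
            · exact h'
            · exfalso
              have : b' = b := w.injective (h'.trans hvb')
              rw [this] at hvb'
              omega
          have h4 := h1b b hb1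
          exact IHt b' hb'k hb'n (by omega) (by omega) hwb'lt (by omega)
    have hS : ∃ b', k < b' ∧ b' ≤ n ∧ v a < v b' ∧ v b' ≤ w a ∧ w b' ≤ v a := by
      obtain ⟨b0, hvb0⟩ : ∃ b0, v b0 = w a := ⟨v.symm (w a), v.apply_symm_apply _⟩
      have hb00 : 0 < b0 := by
        have : b0 ≠ 0 := fun h => by
          rw [h, hv0] at hvb0
          omega
        omega
      have hb0k : k < b0 := by
        by_contra hle
        push_neg at hle
        have hle2 := h1a b0 hb00 hle
        rcases lt_or_eq_of_le hle2 with h' | h'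
        · have := hamax' b0 hb00 hle h'
          omega
        · have hba : b0 = a := w.injective (by rw [← h', hvb0])
          rw [hba] at hvb0
          omega
      have hb0n : b0 ≤ n := by
        by_contra h'
        push_neg at h'
        have := hvfix b0 h'
        rw [this] at hvb0
        omega
      have hwb0lt : w b0 < v b0 := by
        have hle2 := h1b b0 hb0k
        rcases lt_or_eq_of_le hle2 with h' | h'
        · exact h'
        · exfalso
          have : b0 = a := w.injective (h'.trans hvb0)
          omega
      exact descent (v b0) b0 hb0k hb0n (by omega) (by omega) hwb0lt le_rfl
    -- choose such b with v b minimal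
    obtain ⟨b1, hb1⟩ := hS
    obtain ⟨b, hbS, hbmin⟩ := Finset.exists_min_image
      ((Finset.Icc (k+1) n).filter (fun b => v a < v b ∧ v b ≤ w a ∧ w b ≤ v a)) v
      ⟨b1, by simp only [mem_filter, mem_Icc]; omega⟩
    simp only [mem_filter, mem_Icc] at hbS
    obtain ⟨⟨hbk', hbn⟩, hvab, hbwa, hwbva⟩ := hbS
    have hbk : k < b := by omega
    have hbmin' : ∀ c, k < c → c ≤ n → v a < v c → v c ≤ w a → w c ≤ v a → v b ≤ v c := by
      intro c h1' h2' h3' h4' h5'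
      exact hbmin c (by simp only [mem_filter, mem_Icc]; exact ⟨⟨by omega, h2'⟩, h3', h4', h5'⟩)
    have hab : a < b := by omega
    -- the gap condition
    have gap : ∀ c, a < c → c < b → v c < v a ∨ v b < v c := by
      intro c hac hcb
      have hc0 : 0 < c := by omega
      rcases lt_trichotomy (v c) (v a) with h | h | h
      · exact Or.inl h
      · exact absurd (v.injective h) (by omega)
      rcases lt_trichotomy (v c) (v b) with h' | h' | h'
      · exfalso
        rcases le_or_gt c k with hck | hck
        · have hle2 := h1a c hc0 hck
          rcases lt_or_eq_of_le hle2 with h'' | h'' 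
          · have := hamax' c hc0 hck h''
            omega
          · -- v c = w c
            have := h2 a c ha0' hac (by omega) (by omega)
            omega
        · rcases le_or_gt (w c) (v a) with hwc | hwc
          · have := hbmin' c hck (by omega) (by omega) (by omega) hwc
            omega
          · have := h2 c b hc0 hcb (by omega) (by omega)
            omega
      · exact absurd (v.injective h') (by omega)
      · exact Or.inr h'
    -- the new permutation
    set v' := v * Equiv.swap a b with hv'
    have hv'a : v' a = v b := by
      rw [hv', Equiv.Perm.mul_apply, Equiv.swap_apply_left]
    have hv'b : v' b = v a := by
      rw [hv', Equiv.Perm.mul_apply, Equiv.swap_apply_right]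
    have hv'o : ∀ x, x ≠ a → x ≠ b → v' x = v x := by
      intro x hx1 hx2
      rw [hv', Equiv.Perm.mul_apply, Equiv.swap_apply_of_ne_of_ne hx1 hx2]
    have hlen : len v' = len v + 1 := len_succ v n a b hvfix hab hbn hvab gap
    have hcov : kCov k v v' := ⟨a, b, ha0', hak, hbk, rfl, hlen⟩
    have hv'0 : v' 0 = 0 := by
      rw [hv'o 0 (by omega) (by omega), hv0]
    have hv'fix : ∀ i, n < i → v' i = i := by
      intro i hi
      rw [hv'o i (by omega) (by omega), hvfix i hi]
    have h1' : ∀ p q, 0 < p → p ≤ k → k < q → v' p ≤ w p ∧ w q ≤ v' q := by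
      intro p q hp hpk hkq
      constructor
      · rcases eq_or_ne p a with rfl | hpa
        · rw [hv'a]; exact hbwa
        · rw [hv'o p hpa (by omega)]
          exact h1a p hp hpk
      · rcases eq_or_ne q b with rfl | hqb
        · rw [hv'b]; exact hwbva
        · rw [hv'o q (by omega) hqb]
          exact h1b q hkq
    have h2' : ∀ p q, 0 < p → p < q → v' p < v' q → w q < w p → p ≤ k ∧ k < q := by
      intro p q hp hpq hv'lt hwlt
      by_cases hpa : p = a
      · by_cases hqb : q = b
        · rw [hpa, hqb, hv'a, hv'b] at hv'lt
          omega
        · have hqa : q ≠ a := by omega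
          rw [hpa, hv'a, hv'o q hqa hqb] at hv'lt
          rw [hpa] at hwlt
          refine ⟨by omega, ?_⟩
          have := h2 a q ha0' (by omega) (by omega) hwlt
          omega
      · by_cases hqa : q = a
        · have hpb : p ≠ b := by omega
          rw [hqa, hv'a, hv'o p hpa hpb] at hv'lt
          rw [hqa] at hwlt
          exfalso
          rcases lt_trichotomy (v p) (v a) with h | h | h
          · have := h2 p a hp (by omega) h hwlt
            omega
          · exact hpa (v.injective h)
          · have hpk : p ≤ k := by omega
            have hle2 := h1a p hp hpk
            rcases lt_or_eq_of_le hle2 with h'' | h''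
            · have := hamax' p hp hpk h''
              omega
            · omega
        · by_cases hpb : p = b
          · have hqb : q ≠ b := by omega
            rw [hpb, hv'b, hv'o q hqa hqb] at hv'lt
            rw [hpb] at hwlt
            exfalso
            have hvan : v a ≤ n := hvle a (by omega)
            rcases lt_trichotomy (v q) (v b) with h | h | h
            · have hqn : q ≤ n := by
                by_contra hq
                push_neg at hq
                have e1 := hvfix q hq
                have e2 := hw q hq
                omega
              have := hbmin' q (by omega) hqn (by omega) (by omega) (by omega)
              omega
            · exact hqb (v.injective h)
            · have := h2 b q (by omega) (by omega) h hwlt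
              omega
          · by_cases hqb : q = b
            · rw [hqb, hv'b, hv'o p hpa hpb] at hv'lt
              rw [hqb] at hwlt
              refine ⟨?_, by omega⟩
              by_contra hpk
              push_neg at hpk
              have := h2 p b hp (by omega) (by omega) hwlt
              omega
            · rw [hv'o p hpa hpb, hv'o q hqa hqb] at hv'lt
              exact h2 p q hp hpq hv'lt hwlt
    have dist_def : ∀ x y : ℕ, Nat.dist x y = x - y + (y - x) := fun x y => rfl
    have hdec : ∑ i ∈ range (n+1), Nat.dist (v' i) (w i)
        < ∑ i ∈ range (n+1), Nat.dist (v i) (w i) := by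
      apply Finset.sum_lt_sum
      · intro i _
        by_cases hia : i = a
        · rw [hia, hv'a, dist_def, dist_def]
          omega
        · by_cases hib : i = b
          · rw [hib, hv'b, dist_def, dist_def]
            have := h1b b hbk
            omega
          · rw [hv'o i hia hib]
      · refine ⟨a, by simp only [mem_range]; omega, ?_⟩
        rw [hv'a, dist_def, dist_def]
        omega
    exact Relation.ReflTransGen.head hcov (IH v' (by omega) hv'0 hv'fix h1' h2')


end KBruhatAux

/-- The converse direction of the Bergeron–Sottile characterization of the `k`-Bruhat
order on `S_n`: if (1) `v(a) ≤ w(a)` and `v(b) ≥ w(b)` for all `a ≤ k < b`, and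
(2) whenever `a < b` with `v(a) < v(b)` and `w(a) > w(b)` one has `a ≤ k < b`,
then `v ≤_k w`. -/
theorem kBruhat_characterization_backward (n k : ℕ) (hk : 1 ≤ k) (hkn : k ≤ n)
    (v w : Equiv.Perm ℕ)
    (hv0 : v 0 = 0) (hw0 : w 0 = 0)
    (hv : ∀ i, n < i → v i = i) (hw : ∀ i, n < i → w i = i)
    (h1 : ∀ a b, 0 < a → a ≤ k → k < b → v a ≤ w a ∧ w b ≤ v b)
    (h2 : ∀ a b, 0 < a → a < b → v a < v b → w b < w a → a ≤ k ∧ k < b) :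
    kBruhat k v w :=
  KBruhatAux.main n k hk hkn w hw0 hw
    (∑ i ∈ Finset.range (n+1), Nat.dist (v i) (w i) + 1) v (by omega) hv0 hv h1 h2

end
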